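/- Let k ≥ 1, let G be a finite connected simple graph that is (P3+kP2)-free and contains a vertex set A inducing P3+(k-1)P2. Let c1 be a regular vertex of G. If a vertex v not belonging to the closed neighbourhood N[c1] is adjacent to some vertex of the open neighbourhood N(c1), then there exists a regular vertex c of G such that v is adjacent to every vertex of N(c). -/

import Mathlib

open SimpleGraph

/-- The disjoint union of a path `P₃` and `k` copies of `P₂`. -/
def P3kP2 (k : ℕ) : SimpleGraph (Fin 3 ⊕ Fin k × Fin 2) :=
  SimpleGraph.fromRel fun x y =>
    match x, y with
    | Sum.inl a, Sum.inl b => (b : ℕ) = (a : ℕ) + 1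
    | Sum.inr a, Sum.inr b => a.1 = b.1 ∧ a.2 ≠ b.2
    | _, _ => False

/-- `G` contains no induced subgraph isomorphic to `H`. -/
def HFree {V W : Type*} (G : SimpleGraph V) (H : SimpleGraph W) : Prop :=
  IsEmpty (H ↪g G)

/-- `D` is a dominating set of `G`. -/
def IsDomSet {V : Type*} (G : SimpleGraph V) (D : Set V) : Prop :=
  ∀ v ∉ D, ∃ u ∈ D, G.Adj u v

/-- `D` is a minimum dominating set of `G`. -/
def IsMinDomSet {V : Type*} (G : SimpleGraph V) (D : Set V) : Prop :=
  IsDomSet G D ∧ ∀ D' : Set V, IsDomSet G D' → D.ncard ≤ D'.ncard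

/-- The distance from a vertex `v` to a set `A` of vertices. -/
noncomputable def distToSet {V : Type*} (G : SimpleGraph V) (v : V) (A : Set V) : ℕ :=
  sInf ((G.dist v) '' A)

/-- The set of vertices at distance two from `A` whose open neighbourhood is a clique. -/
def cliqueDistTwo {V : Type*} (G : SimpleGraph V) (A : Set V) : Set V :=
  {v | distToSet G v A = 2 ∧ G.IsClique (G.neighborSet v)}

/-- A vertex `c₁` is regular (w.r.t. `A` and `k`) if `c₁ ∈ 𝒞` and there are `k` further
vertices of `𝒞` such that all `k+1` of them are pairwise at distance at least four. -/
def IsRegularVertex {V : Type*} (G : SimpleGraph V) (k : ℕ) (A : Set V) (c₁ : V) : Prop :=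
  c₁ ∈ cliqueDistTwo G A ∧ ∃ c : Fin k → V, (∀ i, c i ∈ cliqueDistTwo G A) ∧
    (∀ i, 4 ≤ G.dist c₁ (c i)) ∧ ∀ i j, i ≠ j → 4 ≤ G.dist (c i) (c j)

/-- `v` is a private neighbour of `u` with respect to the dominating set `D`:
`N[v] ∩ D = {u}`. -/
def IsPrivateNbr {V : Type*} (G : SimpleGraph V) (D : Set V) (u v : V) : Prop :=
  (insert v (G.neighborSet v)) ∩ D = {u}

/-- A stable (independent) set of vertices. -/
def IsStable {V : Type*} (G : SimpleGraph V) (S : Set V) : Prop :=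
  S.Pairwise fun u v => ¬ G.Adj u v

theorem stmt2
    {V : Type*} [Fintype V] (k : ℕ) (hk : 1 ≤ k) (G : SimpleGraph V)
    (hconn : G.Connected) (hfree : HFree G (P3kP2 k))
    (A : Set V) (hA : ∃ f : P3kP2 (k-1) ↪g G, Set.range f = A)
    (c₁ : V) (hc₁ : IsRegularVertex G k A c₁)
    (v : V) (hv : v ∉ insert c₁ (G.neighborSet c₁))
    (hadj : ∃ w ∈ G.neighborSet c₁, G.Adj v w) :
    ∃ c : V, IsRegularVertex G k A c ∧ ∀ w ∈ G.neighborSet c, G.Adj v w := by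
  obtain ⟨w, hw, hvw⟩ := hadj
  rw [SimpleGraph.mem_neighborSet] at hw
  obtain ⟨hC, c, hcC, hd1, hdp⟩ := hc₁
  have hvne : v ≠ c₁ := fun h => hv (by simp [h])
  have hvnadj : ¬ G.Adj c₁ v := fun h => hv (by simp [h])
  -- each c i is a regular vertex
  have hreg : ∀ i, IsRegularVertex G k A (c i) := by
    intro i
    refine ⟨hcC i, fun j => if j = i then c₁ else c j, fun j => ?_, fun j => ?_, fun j j' hjj' => ?_⟩
    · by_cases h : j = i <;> simp [h, hC, hcC]
    · by_cases h : j = i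
      · simp only [if_pos h]
        rw [SimpleGraph.dist_comm]
        exact hd1 i
      · simp only [if_neg h]
        exact hdp i j (fun hh => h hh.symm)
    · by_cases h : j = i <;> by_cases h' : j' = i
      · exact absurd (h.trans h'.symm) hjj'
      · simp only [if_pos h, if_neg h']
        exact hd1 j'
      · simp only [if_neg h, if_pos h']
        rw [SimpleGraph.dist_comm]
        exact hd1 j
      · simp only [if_neg h, if_neg h']
        exact hdp j j' hjj'
  by_contra hcon
  push_neg at hcon
  choose b hb hvb using fun i => hcon (c i) (hreg i)
  simp only [SimpleGraph.mem_neighborSet] at hb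
  -- distance machinery
  have tri : ∀ (a a' x y : V) (p q : ℕ), G.dist a x ≤ p → G.dist a' y ≤ q →
      G.dist a a' ≤ p + G.dist x y + q := by
    intro a a' x y p q hx hy
    have t1 : G.dist a a' ≤ G.dist a x + G.dist x a' := hconn.dist_triangle
    have t2 : G.dist x a' ≤ G.dist x y + G.dist y a' := hconn.dist_triangle
    have t3 : G.dist y a' = G.dist a' y := SimpleGraph.dist_comm
    omega
  have nadj : ∀ (a a' x y : V) (p q : ℕ), 4 ≤ G.dist a a' → G.dist a x ≤ p →
      G.dist a' y ≤ q → p + q ≤ 2 → ¬ G.Adj x y := by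
    intro a a' x y p q h4 hx hy hpq hxy
    have h1 : G.dist x y = 1 := SimpleGraph.dist_eq_one_iff_adj.2 hxy
    have := tri a a' x y p q hx hy
    omega
  have nne : ∀ (a a' x y : V) (p q : ℕ), 4 ≤ G.dist a a' → G.dist a x ≤ p →
      G.dist a' y ≤ q → p + q ≤ 3 → x ≠ y := by
    intro a a' x y p q h4 hx hy hpq hxy
    subst hxy
    have h1 : G.dist x x = 0 := by simp
    have := tri a a' x x p q hx hy
    omega
  -- basic distance bounds
  have dw : G.dist c₁ w ≤ 1 := le_of_eq (SimpleGraph.dist_eq_one_iff_adj.2 hw)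
  have dv : G.dist c₁ v ≤ 2 := by
    have t : G.dist c₁ v ≤ G.dist c₁ w + G.dist w v := hconn.dist_triangle
    have h1 : G.dist w v = 1 := SimpleGraph.dist_eq_one_iff_adj.2 hvw.symm
    omega
  have dself : ∀ x : V, G.dist x x ≤ 0 := fun x => by simp
  have dbi : ∀ i, G.dist (c i) (b i) ≤ 1 :=
    fun i => le_of_eq (SimpleGraph.dist_eq_one_iff_adj.2 (hb i))
  -- the nonadjacency / distinctness table
  have nvc₁ : ¬ G.Adj v c₁ := fun h => hvnadj h.symm
  have nvc : ∀ i, ¬ G.Adj v (c i) := fun i => nadj c₁ (c i) v (c i) 2 0 (hd1 i) dv (dself _) (by norm_num)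
  have nvc' : ∀ i, ¬ G.Adj (c i) v := fun i h => nvc i h.symm
  have evc : ∀ i, v ≠ c i := fun i => nne c₁ (c i) v (c i) 2 0 (hd1 i) dv (dself _) (by norm_num)
  have evb : ∀ i, v ≠ b i := fun i => nne c₁ (c i) v (b i) 2 1 (hd1 i) dv (dbi i) (by norm_num)
  have hvb' : ∀ i, ¬ G.Adj (b i) v := fun i h => hvb i h.symm
  have nwc : ∀ i, ¬ G.Adj w (c i) := fun i => nadj c₁ (c i) w (c i) 1 0 (hd1 i) dw (dself _) (by norm_num)
  have nwc' : ∀ i, ¬ G.Adj (c i) w := fun i h => nwc i h.symm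
  have ewc : ∀ i, w ≠ c i := fun i => nne c₁ (c i) w (c i) 1 0 (hd1 i) dw (dself _) (by norm_num)
  have nwb : ∀ i, ¬ G.Adj w (b i) := fun i => nadj c₁ (c i) w (b i) 1 1 (hd1 i) dw (dbi i) (by norm_num)
  have nwb' : ∀ i, ¬ G.Adj (b i) w := fun i h => nwb i h.symm
  have ewb : ∀ i, w ≠ b i := fun i => nne c₁ (c i) w (b i) 1 1 (hd1 i) dw (dbi i) (by norm_num)
  have ncc : ∀ i, ¬ G.Adj c₁ (c i) := fun i => nadj c₁ (c i) c₁ (c i) 0 0 (hd1 i) (dself _) (dself _) (by norm_num)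
  have ncc' : ∀ i, ¬ G.Adj (c i) c₁ := fun i h => ncc i h.symm
  have ecc : ∀ i, c₁ ≠ c i := fun i => nne c₁ (c i) c₁ (c i) 0 0 (hd1 i) (dself _) (dself _) (by norm_num)
  have ncb : ∀ i, ¬ G.Adj c₁ (b i) := fun i => nadj c₁ (c i) c₁ (b i) 0 1 (hd1 i) (dself _) (dbi i) (by norm_num)
  have ncb' : ∀ i, ¬ G.Adj (b i) c₁ := fun i h => ncb i h.symm
  have ecb : ∀ i, c₁ ≠ b i := fun i => nne c₁ (c i) c₁ (b i) 0 1 (hd1 i) (dself _) (dbi i) (by norm_num)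
  have nij : ∀ i j, i ≠ j → ¬ G.Adj (c i) (c j) :=
    fun i j h => nadj (c i) (c j) (c i) (c j) 0 0 (hdp i j h) (dself _) (dself _) (by norm_num)
  have eijc : ∀ i j, i ≠ j → c i ≠ c j :=
    fun i j h => nne (c i) (c j) (c i) (c j) 0 0 (hdp i j h) (dself _) (dself _) (by norm_num)
  have ncbij : ∀ i j, i ≠ j → ¬ G.Adj (c i) (b j) :=
    fun i j h => nadj (c i) (c j) (c i) (b j) 0 1 (hdp i j h) (dself _) (dbi j) (by norm_num)
  have ecbij : ∀ i j, i ≠ j → c i ≠ b j :=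
    fun i j h => nne (c i) (c j) (c i) (b j) 0 1 (hdp i j h) (dself _) (dbi j) (by norm_num)
  have nbcij : ∀ i j, i ≠ j → ¬ G.Adj (b i) (c j) :=
    fun i j h => nadj (c i) (c j) (b i) (c j) 1 0 (hdp i j h) (dbi i) (dself _) (by norm_num)
  have nbbij : ∀ i j, i ≠ j → ¬ G.Adj (b i) (b j) :=
    fun i j h => nadj (c i) (c j) (b i) (b j) 1 1 (hdp i j h) (dbi i) (dbi j) (by norm_num)
  have ebbij : ∀ i j, i ≠ j → b i ≠ b j :=
    fun i j h => nne (c i) (c j) (b i) (b j) 1 1 (hdp i j h) (dbi i) (dbi j) (by norm_num)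
  have ecbii : ∀ i, c i ≠ b i := fun i => (hb i).ne
  have hb' : ∀ i, G.Adj (b i) (c i) := fun i => (hb i).symm
  -- the embedding
  have F : P3kP2 k ↪g G := by
    refine ⟨⟨fun x => Sum.elim (![v, w, c₁]) (fun p => ![c p.1, b p.1] p.2) x, ?_⟩, ?_⟩
    · intro x y hxy
      rcases x with a | ⟨i, s⟩ <;> rcases y with a' | ⟨j, t⟩
      · fin_cases a <;> fin_cases a' <;>
          first
            | rfl
            | (simp at hxy
               first
            | exact absurd hxy hvw.ne
            | exact absurd hxy hvne
            | exact absurd hxy hvw.ne'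
            | exact absurd hxy hw.ne'
            | exact absurd hxy hvne.symm
            | exact absurd hxy hw.ne)
      · fin_cases a <;> fin_cases t <;> simp at hxy <;>
          first
            | exact absurd hxy (evc j)
            | exact absurd hxy (evb j)
            | exact absurd hxy (ewc j)
            | exact absurd hxy (ewb j)
            | exact absurd hxy (ecc j)
            | exact absurd hxy (ecb j)
      · fin_cases a' <;> fin_cases s <;> simp at hxy <;>
          first
            | exact absurd hxy.symm (evc i)
            | exact absurd hxy.symm (evb i)
            | exact absurd hxy.symm (ewc i)
            | exact absurd hxy.symm (ewb i)
            | exact absurd hxy.symm (ecc i)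
            | exact absurd hxy.symm (ecb i)
      · fin_cases s <;> fin_cases t <;> simp at hxy
        · have hij : i = j := by
            by_contra h
            exact eijc i j h hxy
          subst hij; rfl
        · by_cases h : i = j
          · subst h; exact absurd hxy (ecbii i)
          · exact absurd hxy (ecbij i j h)
        · by_cases h : i = j
          · subst h; exact absurd hxy.symm (ecbii i)
          · exact absurd hxy.symm (ecbij j i (Ne.symm h))
        · have hij : i = j := by
            by_contra h
            exact ebbij i j h hxy
          subst hij; rfl
    · intro x y
      show G.Adj (Sum.elim ![v, w, c₁] (fun p => ![c p.1, b p.1] p.2) x)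
        (Sum.elim ![v, w, c₁] (fun p => ![c p.1, b p.1] p.2) y) ↔ (P3kP2 k).Adj x y
      rcases x with a | ⟨i, s⟩ <;> rcases y with a' | ⟨j, t⟩
      · fin_cases a <;> fin_cases a' <;>
          simp [P3kP2, hvw, hvw.symm, hw, hw.symm, nvc₁, hvnadj]
      · fin_cases a <;> fin_cases t <;> simp [P3kP2, nvc, hvb, nwc, nwb, ncc, ncb]
      · fin_cases a' <;> fin_cases s <;> simp [P3kP2, nvc', hvb', nwc', nwb', ncc', ncb']
      · by_cases hij : i = j
        · subst hij
          fin_cases s <;> fin_cases t <;> simp [P3kP2, hb, hb']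
        · fin_cases s <;> fin_cases t <;>
            simp [P3kP2, nij i j hij, ncbij i j hij, nbcij i j hij, nbbij i j hij, hij,
              Ne.symm hij]
  exact hfree.false F
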